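/- Let $A, B > 0$, $\ell \geq 1$ an integer with $B > 2\ell A$, and let $F(z) = e^{-(B-2\ell A)z}\left(\frac{1-e^{-Az}}{Az}\right)^{2\ell}$. Let $\mathscr{L} \geq 1$ and let $s = \sigma + it$ be complex with $\sigma < 1$. Write $\sigma = 1 - x/\mathscr{L}$ and $t = y/\mathscr{L}$. Then for every real $\alpha$ with $0 \leq \alpha \leq 2\ell$, $|F((1-s)\mathscr{L})| \leq e^{-(B-2\ell A)x} \left(\frac{2}{A\sqrt{x^2+y^2}}\right)^{\alpha}$. -/

import Mathlib

/-- For `Re w ≥ 0`, `w ≠ 0`, one has `|1 - e^{-w}| ≤ |w|`. -/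
lemma abs_one_sub_exp_neg_le (w : ℂ) (hw : 0 ≤ w.re) (hw0 : w ≠ 0) :
    ‖1 - Complex.exp (-w)‖ ≤ ‖w‖ := by
  have hkey : ∫ t in (0:ℝ)..1, Complex.exp ((-w) * t)
      = (Complex.exp (-w) - 1) / (-w) := by
    rw [integral_exp_mul_complex (by simpa using hw0)]
    simp
  have hbound : ‖∫ t in (0:ℝ)..1, Complex.exp ((-w) * t)‖ ≤ 1 * |1 - 0| := by
    apply intervalIntegral.norm_integral_le_of_norm_le_const
    intro t ht
    rw [Set.uIoc_of_le (by norm_num)] at ht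
    rw [Complex.norm_exp]
    have : ((-w) * (t:ℂ)).re = -(w.re * t) := by
      simp [Complex.mul_re]
    have h5 : 0 ≤ w.re * t := mul_nonneg hw (le_of_lt ht.1)
    rw [this]
    exact Real.exp_le_one_iff.mpr (by linarith)
  rw [hkey] at hbound
  have h2 : ‖(Complex.exp (-w) - 1) / (-w)‖ ≤ 1 := by
    simpa using hbound
  rw [norm_div] at h2
  have hwpos : 0 < ‖-w‖ := by
    simpa using (norm_pos_iff.mpr hw0)
  have := (div_le_one hwpos).mp h2
  calc ‖1 - Complex.exp (-w)‖
      = ‖Complex.exp (-w) - 1‖ := by rw [norm_sub_rev]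
    _ ≤ ‖-w‖ := this
    _ = ‖w‖ := by simp

/-- Bound on the Laplace transform `F(z) = e^{-(B-2ℓA)z}((1-e^{-Az})/(Az))^{2ℓ}`
at `z = (1-s)ℒ`: writing `σ = 1 - x/ℒ < 1` and `t = y/ℒ`, for any
`0 ≤ α ≤ 2ℓ` one has `|F((1-s)ℒ)| ≤ e^{-(B-2ℓA)x} (2/(A√(x²+y²)))^α`. -/
theorem laplace_weight_decay (A B : ℝ) (hA : 0 < A) (hB : 0 < B)
    (ℓ : ℕ) (hℓ : 1 ≤ ℓ) (hBA : 2 * ℓ * A < B)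
    (F : ℂ → ℂ)
    (hF : F = fun z => Complex.exp (-((B - 2 * ℓ * A) * z))
        * ((1 - Complex.exp (-(A * z))) / (A * z)) ^ (2 * ℓ))
    (ℒ : ℝ) (hℒ : 1 ≤ ℒ) (s : ℂ) (hσ : s.re < 1)
    (x y : ℝ) (hx : x = (1 - s.re) * ℒ) (hy : y = s.im * ℒ)
    (α : ℝ) (hα0 : 0 ≤ α) (hα : α ≤ 2 * ℓ) :
    ‖F ((1 - s) * ℒ)‖
      ≤ Real.exp (-((B - 2 * ℓ * A) * x))
          * (2 / (A * Real.sqrt (x ^ 2 + y ^ 2))) ^ α := by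
  set z : ℂ := (1 - s) * ℒ with hz
  have hℒ0 : (0:ℝ) < ℒ := lt_of_lt_of_le one_pos hℒ
  have hzre : z.re = x := by
    simp [hz, Complex.sub_re, Complex.mul_re, hx]
  have hzim : z.im = -y := by
    simp [hz, Complex.sub_im, Complex.mul_im, hy]
  have hxpos : 0 < x := by
    rw [hx]; exact mul_pos (by linarith) hℒ0
  have habsz : ‖z‖ = Real.sqrt (x ^ 2 + y ^ 2) := by
    rw [Complex.norm_def, Complex.normSq_apply, hzre, hzim]
    ring_nf
  have hrad : 0 < Real.sqrt (x ^ 2 + y ^ 2) := by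
    rw [← habsz]
    exact norm_pos_iff.mpr (by
      intro h
      rw [Complex.ext_iff] at h
      simp [hzre] at h
      linarith [h.1])
  have hz0 : z ≠ 0 := by
    intro h
    rw [h] at habsz
    simp at habsz
    linarith [habsz ▸ hrad]
  set w : ℂ := (A:ℂ) * z with hwdef
  have hw0 : w ≠ 0 := mul_ne_zero (by exact_mod_cast hA.ne') hz0
  have hwre : w.re = A * x := by
    simp [hwdef, Complex.mul_re, hzre]
  have habsw : ‖w‖ = A * Real.sqrt (x ^ 2 + y ^ 2) := by
    rw [hwdef, norm_mul, habsz, Complex.norm_real, Real.norm_eq_abs, abs_of_pos hA]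
  have hwrepos : 0 < w.re := by rw [hwre]; exact mul_pos hA hxpos
  -- bounds on the ratio
  set r : ℝ := ‖(1 - Complex.exp (-(A * z))) / (A * z)‖ with hrdef
  have hr0 : 0 ≤ r := norm_nonneg _
  have hnum2 : ‖1 - Complex.exp (-w)‖ ≤ 2 := by
    calc ‖1 - Complex.exp (-w)‖
        ≤ ‖(1:ℂ)‖ + ‖Complex.exp (-w)‖ := by
          simpa [sub_eq_add_neg] using norm_add_le (1:ℂ) (-Complex.exp (-w))
      _ ≤ 1 + 1 := by
          gcongr
          · simp
          · rw [Complex.norm_exp]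
            apply Real.exp_le_one_iff.mpr
            simp [hwrepos.le]
      _ = 2 := by norm_num
  have hnum1 := abs_one_sub_exp_neg_le w hwrepos.le hw0
  have habswpos : 0 < ‖w‖ := norm_pos_iff.mpr hw0
  have hr_le1 : r ≤ 1 := by
    rw [hrdef, norm_div, ← hwdef, div_le_one habswpos]
    exact hnum1
  set c : ℝ := 2 / (A * Real.sqrt (x ^ 2 + y ^ 2)) with hcdef
  have hcpos : 0 < c := div_pos two_pos (mul_pos hA hrad)
  have hr_lec : r ≤ c := by
    rw [hrdef, norm_div, ← hwdef, div_le_iff₀ habswpos, hcdef, habsw]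
    calc ‖1 - Complex.exp (-w)‖ ≤ 2 := hnum2
      _ = 2 / (A * Real.sqrt (x ^ 2 + y ^ 2)) * (A * Real.sqrt (x ^ 2 + y ^ 2)) := by
          field_simp
  set b : ℝ := min 1 c with hbdef
  have hbpos : 0 < b := lt_min one_pos hcpos
  have hrb : r ≤ b := le_min hr_le1 hr_lec
  -- main estimate
  have hpow : r ^ (2 * ℓ) ≤ c ^ α := by
    calc r ^ (2 * ℓ) ≤ b ^ (2 * ℓ) := pow_le_pow_left₀ hr0 hrb _
      _ = b ^ ((2 * ℓ : ℕ) : ℝ) := by rw [Real.rpow_natCast]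
      _ ≤ b ^ α := by
          apply Real.rpow_le_rpow_of_exponent_ge hbpos (min_le_left _ _)
          exact_mod_cast hα
      _ ≤ c ^ α := Real.rpow_le_rpow hbpos.le (min_le_right _ _) hα0
  have hexp : ‖Complex.exp (-(((B:ℂ) - 2 * ℓ * A) * z))‖
      = Real.exp (-((B - 2 * ℓ * A) * x)) := by
    rw [Complex.norm_exp]
    congr 1
    have : ((B:ℂ) - 2 * ℓ * A) = ((B - 2 * ℓ * A : ℝ) : ℂ) := by push_cast; ring
    rw [this]
    simp [Complex.mul_re, hzre]
  rw [hF]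
  simp only
  rw [norm_mul, norm_pow, ← hrdef, hexp]
  exact mul_le_mul_of_nonneg_left hpow (Real.exp_nonneg _)
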